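/- Let M be a set, φ : M → ℝ → M a map, and f : M → ℝ → ℝ → ℝ a function such that for all x ∈ M and t, t′, t″ ∈ ℝ the cocycle identity f(φ(x,t), t′, t″) − f(x, t+t′, t″) + f(x, t, t′+t″) − f(x, t, t′) = 0 holds, and such that for all x ∈ M and t ∈ ℝ the function u ↦ f(x,t,u) is differentiable. Define k(x,t) to be the derivative of u ↦ f(x,t,u) at u = 0. Then for all x ∈ M and t, t′ ∈ ℝ: k(x, t+t′) − k(φ(x,t), t′) equals the derivative of u ↦ f(x,t,u) at u = t′. -/

import Mathlib

/-- Differentiating the groupoid 2-cocycle identity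
`f(φ(x,t),t',t'') − f(x,t+t',t'') + f(x,t,t'+t'') − f(x,t,t') = 0` with respect to `t''` at
`t'' = 0`: with `k(x,t)` the derivative of `u ↦ f(x,t,u)` at `0`, one has
`k(x,t+t') − k(φ(x,t),t') = (d/du)|_{u=t'} f(x,t,u)`. -/
theorem flow_cocycle_derivative_relation
    {M : Type*} (φ : M → ℝ → M) (f : M → ℝ → ℝ → ℝ)
    (hcocycle : ∀ (x : M) (t t' t'' : ℝ),
      f (φ x t) t' t'' - f x (t + t') t'' + f x t (t' + t'') - f x t t' = 0)
    (hdiff : ∀ (x : M) (t : ℝ), Differentiable ℝ (f x t))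
    (k : M → ℝ → ℝ) (hk : ∀ (x : M) (t : ℝ), k x t = deriv (f x t) 0) :
    ∀ (x : M) (t t' : ℝ), k x (t + t') - k (φ x t) t' = deriv (f x t) t' := by
  intro x t t'
  have hfun : f x (t + t') = fun u => f (φ x t) t' u + f x t (t' + u) - f x t t' := by
    funext u
    linarith [hcocycle x t t' u]
  have h1 : HasDerivAt (f (φ x t) t') (deriv (f (φ x t) t') 0) 0 :=
    (hdiff (φ x t) t' 0).hasDerivAt
  have h2 : HasDerivAt (fun u => f x t (t' + u)) (deriv (f x t) t') 0 := by
    have := ((hdiff x t (t' + 0)).hasDerivAt.comp 0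
      ((hasDerivAt_const (0:ℝ) t').add (hasDerivAt_id 0)))
    simpa [Function.comp_def] using this
  have h3 : HasDerivAt (f x (t + t'))
      (deriv (f (φ x t) t') 0 + deriv (f x t) t') 0 := by
    rw [hfun]
    simpa using ((h1.add h2).sub_const (f x t t'))
  rw [hk, hk, h3.deriv]
  ring
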